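/- arXiv:0902.3464 — 5 statements merged into one kernel-verified Lean document; each statement's English description precedes it below -/
import Mathlib

section
/- Let G be a profinite group and A a commutative ring with the discrete topology. The natural map Maps_cts(G, A) ⊗_A Maps_cts(G, A) → Maps_cts(G × G, A), sending f ⊗ g to the function (x,y) ↦ f(x)g(y), is an isomorphism of A-algebras, where G × G has the product topology. -/
open TensorProduct

/-- For a profinite group `G` and a commutative ring `A` with the discrete topology,
the natural map `Maps_cts(G,A) ⊗_A Maps_cts(G,A) → Maps_cts(G × G, A)`,
`f ⊗ g ↦ ((x,y) ↦ f x * g y)`, is an isomorphism of `A`-algebras. -/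
theorem stmt6 {G : Type*} [Group G] [TopologicalSpace G] [IsTopologicalGroup G]
    [CompactSpace G] [T2Space G] [TotallyDisconnectedSpace G]
    {A : Type*} [CommRing A] [TopologicalSpace A] [DiscreteTopology A] [IsTopologicalRing A] :
    ∃ e : (C(G, A) ⊗[A] C(G, A)) ≃ₐ[A] C(G × G, A),
      ∀ (f g : C(G, A)) (x y : G), e (f ⊗ₜ[A] g) (x, y) = f x * g y := by
  classical
  set φ : (C(G, A) ⊗[A] C(G, A)) →ₐ[A] C(G × G, A) :=
    Algebra.TensorProduct.lift
      (ContinuousMap.compRightAlgHom A A (ContinuousMap.fst (α := G) (β := G)))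
      (ContinuousMap.compRightAlgHom A A (ContinuousMap.snd (α := G) (β := G)))
      (fun f g => Commute.all _ _) with hφ
  have hφ' : ∀ (f g : C(G, A)) (x y : G), φ (f ⊗ₜ[A] g) (x, y) = f x * g y := by
    intro f g x y
    simp [hφ, Algebra.TensorProduct.lift_tmul]
  -- injectivity
  have hinj : Function.Injective φ := by
    rw [injective_iff_map_eq_zero]
    intro t ht
    obtain ⟨s, rfl⟩ := TensorProduct.exists_finset t
    set F : G → (↥s → A) := fun x p => (p : C(G, A) × C(G, A)).1 x with hF
    have hFc : Continuous F := continuous_pi fun p => (p : C(G, A) × C(G, A)).1.continuous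
    have hFrange : (Set.range F).Finite :=
      (isCompact_range hFc).finite (IsDiscrete.univ.mono (Set.subset_univ _))
    set R : Finset (↥s → A) := hFrange.toFinset with hR
    have econt : ∀ v : ↥s → A, Continuous fun x => if F x = v then (1 : A) else 0 := by
      intro v
      exact (continuous_of_discreteTopology
        (f := fun w : ↥s → A => if w = v then (1:A) else 0)).comp hFc
    set e : (↥s → A) → C(G, A) := fun v => ⟨fun x => if F x = v then (1 : A) else 0, econt v⟩
      with he
    have hdecomp : ∀ p : ↥s,
        (p : C(G, A) × C(G, A)).1 = ∑ v ∈ R, (v p) • e v := by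
      intro p
      ext x
      have hx : F x ∈ R := hFrange.mem_toFinset.2 ⟨x, rfl⟩
      have h1 : (p : C(G, A) × C(G, A)).1 x = ∑ v ∈ R, (if F x = v then v p else 0) := by
        rw [Finset.sum_ite_eq R (F x) fun v => v p, if_pos hx]
      rw [h1]
      simp only [ContinuousMap.coe_sum, Finset.sum_apply, ContinuousMap.coe_smul,
        Pi.smul_apply, smul_eq_mul]
      refine Finset.sum_congr rfl fun v _ => ?_
      by_cases h : F x = v <;> simp [he, h]
    have key : ∑ p ∈ s, p.1 ⊗ₜ[A] p.2
        = ∑ v ∈ R, e v ⊗ₜ[A] (∑ p ∈ s.attach, v p • (p : C(G, A) × C(G, A)).2) := by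
      rw [← Finset.sum_attach s (fun p => p.1 ⊗ₜ[A] p.2)]
      calc ∑ p ∈ s.attach, (p : C(G, A) × C(G, A)).1 ⊗ₜ[A] (p : C(G, A) × C(G, A)).2
          = ∑ p ∈ s.attach, ∑ v ∈ R, v p • (e v ⊗ₜ[A] (p : C(G, A) × C(G, A)).2) := by
            refine Finset.sum_congr rfl fun p _ => ?_
            rw [hdecomp p, TensorProduct.sum_tmul]
            exact Finset.sum_congr rfl fun v _ => TensorProduct.smul_tmul' _ _ _
        _ = ∑ v ∈ R, ∑ p ∈ s.attach, v p • (e v ⊗ₜ[A] (p : C(G, A) × C(G, A)).2) :=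
            Finset.sum_comm
        _ = ∑ v ∈ R, e v ⊗ₜ[A] (∑ p ∈ s.attach, v p • (p : C(G, A) × C(G, A)).2) := by
            refine Finset.sum_congr rfl fun v _ => ?_
            rw [TensorProduct.tmul_sum]
            exact Finset.sum_congr rfl fun p _ => (TensorProduct.tmul_smul _ _ _).symm
    have hzero : ∀ v ∈ R, (∑ p ∈ s.attach, v p • (p : C(G, A) × C(G, A)).2) = 0 := by
      intro v hv
      obtain ⟨x, hx⟩ := hFrange.mem_toFinset.1 hv
      ext y
      have h2 := congrArg (fun f : C(G × G, A) => f (x, y)) ht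
      simp only [map_sum, ContinuousMap.coe_sum, Finset.sum_apply,
        ContinuousMap.zero_apply] at h2
      have h3 : ∑ p ∈ s, p.1 x * p.2 y = 0 := by
        rw [← h2]
        exact Finset.sum_congr rfl fun p _ => (hφ' p.1 p.2 x y).symm
      simp only [ContinuousMap.coe_sum, Finset.sum_apply, ContinuousMap.coe_smul,
        Pi.smul_apply, smul_eq_mul, ContinuousMap.zero_apply]
      rw [← h3, ← Finset.sum_attach s (fun p => p.1 x * p.2 y)]
      refine Finset.sum_congr rfl fun p _ => ?_
      have : v p = (p : C(G, A) × C(G, A)).1 x := by rw [← hx]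
      rw [this]
    rw [key]
    refine Finset.sum_eq_zero fun v hv => ?_
    rw [hzero v hv, TensorProduct.tmul_zero]
  -- surjectivity
  have hsurj : Function.Surjective φ := by
    intro F
    set Φ : G → C(G, A) := fun x => F.comp ⟨fun y => (x, y), Continuous.prodMk
      continuous_const continuous_id⟩ with hΦdef
    have hΦ : IsLocallyConstant Φ := by
      rw [IsLocallyConstant.iff_exists_open]
      intro x
      set W : Set (G × G) := {q | F q = F (x, q.2)} with hWdef
      have hWo : IsOpen W := by
        have h : W = (fun q : G × G => (F q, F (x, q.2))) ⁻¹' {q : A × A | q.1 = q.2} := rfl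
        rw [h]
        exact (isOpen_discrete _).preimage
          ((F.continuous).prodMk (F.continuous.comp (continuous_const.prodMk continuous_snd)))
      obtain ⟨u, v, hu, hv, hxu, huniv, huv⟩ :=
        generalized_tube_lemma isCompact_singleton isCompact_univ hWo
          (by rintro ⟨a, b⟩ ⟨ha, -⟩
              simp only [Set.mem_singleton_iff] at ha
              subst ha
              exact rfl)
      refine ⟨u, hu, hxu rfl, fun x' hx' => ?_⟩
      ext y
      exact huv (Set.mk_mem_prod hx' (huniv (Set.mem_univ y)))
    have hfin : (Set.range Φ).Finite := hΦ.range_finite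
    set R : Finset C(G, A) := hfin.toFinset with hR
    have econt : ∀ g : C(G, A), Continuous fun x => if Φ x = g then (1 : A) else 0 := by
      intro g
      exact (hΦ.comp (fun h => if h = g then (1 : A) else 0)).continuous
    refine ⟨∑ g ∈ R, (⟨_, econt g⟩ : C(G, A)) ⊗ₜ[A] g, ?_⟩
    ext ⟨x, y⟩
    rw [map_sum]
    have hx : Φ x ∈ R := hfin.mem_toFinset.2 ⟨x, rfl⟩
    simp only [ContinuousMap.coe_sum, Finset.sum_apply]
    have h4 : ∀ g ∈ R, (φ ((⟨_, econt g⟩ : C(G, A)) ⊗ₜ[A] g)) (x, y)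
        = if Φ x = g then g y else 0 := by
      intro g _
      rw [hφ']
      by_cases h : Φ x = g <;> simp [h]
    rw [Finset.sum_congr rfl h4, Finset.sum_ite_eq R (Φ x) fun g => g y, if_pos hx]
    rfl
  exact ⟨AlgEquiv.ofBijective φ ⟨hinj, hsurj⟩, fun f g x y => hφ' f g x y⟩
end

section
/- Let L/K be a finite Galois extension of fields with Galois group G. The K-algebra of functions f: G → L satisfying f(hgh^{-1}) = h(f(g)) for all g, h ∈ G is isomorphic as a K-algebra to the product ∏_{c ∈ S} L^{C_c}, where S is a set of representatives of the conjugacy classes of G and C_c is the centralizer of c in G, with L^{C_c} the fixed field. -/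
lemma stmt8_aux {K L : Type*} [Field K] [Field L] [Algebra K L]
    (g : L ≃ₐ[K] L) (x : L)
    (hx : x ∈ IntermediateField.fixedField (Subgroup.centralizer {g}))
    (h₁ h₂ : L ≃ₐ[K] L) (heq : h₁ * g * h₁⁻¹ = h₂ * g * h₂⁻¹) :
    h₁ x = h₂ x := by
  have hk : (h₂⁻¹ * h₁) ∈ Subgroup.centralizer ({g} : Set (L ≃ₐ[K] L)) := by
    rw [Subgroup.mem_centralizer_singleton_iff]
    group
    have : h₂⁻¹ * (h₁ * g * h₁⁻¹) * h₂ = g := by rw [heq]; group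
    calc h₂⁻¹ * h₁ * g = (h₂⁻¹ * (h₁ * g * h₁⁻¹) * h₂) * (h₂⁻¹ * h₁) := by group
    _ = g * (h₂⁻¹ * h₁) := by rw [this]
  have := hx ⟨_, hk⟩
  have h' : (h₂⁻¹ * h₁) x = x := this
  rw [AlgEquiv.mul_apply] at h'
  refine (h₂⁻¹ : L ≃ₐ[K] L).injective ?_
  rw [h']
  exact (h₂.symm_apply_apply x).symm

/-- For a finite Galois extension `L/K` with Galois group `G`, the `K`-algebra of
"twisted class functions" `f : G → L` (those with `f(hgh⁻¹) = h(f g)`) is isomorphic, as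
a `K`-algebra, to `∏_{c ∈ S} L^{C_c}` where `S` is a set of representatives of the
conjugacy classes of `G` and `C_c` is the centralizer of `c`. The isomorphism sends `f`
to the tuple `(f c)_{c ∈ S}`; since all algebra operations on both sides are pointwise,
this is recorded by: evaluation at the representatives lands in the fixed fields, is
injective on twisted class functions, and surjects onto the product of fixed fields. -/
theorem stmt8 {K L : Type*} [Field K] [Field L] [Algebra K L]
    [FiniteDimensional K L] [IsGalois K L]
    (c : ConjClasses (L ≃ₐ[K] L) → (L ≃ₐ[K] L)) (hc : ∀ q, ConjClasses.mk (c q) = q) :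
    (∀ f : (L ≃ₐ[K] L) → L, (∀ g h, f (h * g * h⁻¹) = h (f g)) →
      ∀ q, f (c q) ∈ IntermediateField.fixedField (Subgroup.centralizer {c q})) ∧
    (∀ f₁ f₂ : (L ≃ₐ[K] L) → L, (∀ g h, f₁ (h * g * h⁻¹) = h (f₁ g)) →
      (∀ g h, f₂ (h * g * h⁻¹) = h (f₂ g)) →
      (∀ q, f₁ (c q) = f₂ (c q)) → f₁ = f₂) ∧
    (∀ v : ∀ q : ConjClasses (L ≃ₐ[K] L),
        IntermediateField.fixedField (Subgroup.centralizer {c q}),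
      ∃ f : (L ≃ₐ[K] L) → L, (∀ g h, f (h * g * h⁻¹) = h (f g)) ∧
        ∀ q, f (c q) = (v q : L)) := by
  have conj : ∀ g : L ≃ₐ[K] L, ∃ h : L ≃ₐ[K] L,
      h * c (ConjClasses.mk g) * h⁻¹ = g := by
    intro g
    have : IsConj (c (ConjClasses.mk g)) g := ConjClasses.mk_eq_mk_iff_isConj.mp (hc _)
    exact isConj_iff.mp this
  refine ⟨?_, ?_, ?_⟩
  · intro f hf q
    rintro ⟨h, hh⟩
    rw [Subgroup.mem_centralizer_singleton_iff] at hh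
    have key : h * c q * h⁻¹ = c q := by
      rw [hh]; group
    have := hf (c q) h
    rw [key] at this
    exact this.symm
  · intro f₁ f₂ h₁ h₂ heq
    funext g
    obtain ⟨h, hh⟩ := conj g
    rw [← hh, h₁, h₂, heq]
  · intro v
    have key : ∀ (g h : L ≃ₐ[K] L), h * c (ConjClasses.mk g) * h⁻¹ = g →
        (conj g).choose ((v (ConjClasses.mk g) : L)) = h (v (ConjClasses.mk g)) :=
      fun g h hh => stmt8_aux _ _ (v _).2 _ _ ((conj g).choose_spec.trans hh.symm)
    refine ⟨fun g => (conj g).choose (v (ConjClasses.mk g)), ?_, ?_⟩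
    · intro g h
      have hmk : ConjClasses.mk (h * g * h⁻¹) = ConjClasses.mk g := by
        rw [ConjClasses.mk_eq_mk_iff_isConj]
        exact isConj_iff.mpr ⟨h⁻¹, by group⟩
      have hAB : ((v (ConjClasses.mk (h * g * h⁻¹)) : L)) = (v (ConjClasses.mk g) : L) :=
        congrArg (fun q => ((v q : L))) hmk
      have ceq : c (ConjClasses.mk (h * g * h⁻¹)) = c (ConjClasses.mk g) := congrArg c hmk
      have e1 := (conj g).choose_spec
      have e3 : (h * (conj g).choose) * c (ConjClasses.mk (h * g * h⁻¹))
          * (h * (conj g).choose)⁻¹ = h * g * h⁻¹ := by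
        rw [ceq, mul_inv_rev]
        calc h * (conj g).choose * c (ConjClasses.mk g) * ((conj g).choose⁻¹ * h⁻¹)
            = h * ((conj g).choose * c (ConjClasses.mk g) * (conj g).choose⁻¹) * h⁻¹ := by group
        _ = h * g * h⁻¹ := by rw [e1]
      have := key (h * g * h⁻¹) (h * (conj g).choose) e3
      simp only [AlgEquiv.mul_apply] at this
      beta_reduce
      rw [this, hAB]
    · intro q
      have hcq : c (ConjClasses.mk (c q)) = c q := congrArg c (hc q)
      have := key (c q) 1 (by rw [hcq]; group)
      beta_reduce
      rw [this]
      simpa using congrArg (fun q => ((v q : L))) (hc q)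
end

section
/- Let G be a finite group and k a field of characteristic 0 (a subfield of an algebraically closed field k̄). The Galois group Gal(k̄/k) acts on the set of isomorphism classes of irreducible k̄-representations of G by twisting coefficients, and the orbits of this action are in bijection with the isomorphism classes of irreducible k-representations W of G, where the orbit corresponding to W consists of the irreducible summands of W ⊗_k k̄. -/
universe u

/-- A bundled representation of `G` over the commutative ring `R`. -/
structure Rep' (R : Type u) [CommRing R] (G : Type u) [Group G] : Type (u + 1) where
  carrier : Type u
  [isAddCommGroup : AddCommGroup carrier]
  [isModule : Module R carrier]
  rho : Representation R G carrier

attribute [instance] Rep'.isAddCommGroup Rep'.isModule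

/-- Irreducibility: the representation is nonzero and has no nontrivial invariant
submodules. -/
def Rep'.Irr {R : Type u} [CommRing R] {G : Type u} [Group G] (M : Rep' R G) : Prop :=
  Nontrivial M.carrier ∧
    ∀ U : Submodule R M.carrier, (∀ (g : G), ∀ v ∈ U, M.rho g v ∈ U) → U = ⊥ ∨ U = ⊤

/-- Isomorphism of representations over `R`. -/
def Rep'.Iso {R : Type u} [CommRing R] {G : Type u} [Group G] (M N : Rep' R G) : Prop :=
  ∃ e : M.carrier ≃ₗ[R] N.carrier, ∀ (g : G) (v : M.carrier), e (M.rho g v) = N.rho g (e v)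

/-- Two `k̄`-representations `V`, `W` of `G` are Galois twists of each other:
`σ(V) ≅ W` for some `σ ∈ Gal(k̄/k)`, i.e. there is a `σ`-semilinear `G`-equivariant
additive isomorphism `V ≃ W`. -/
def GalTwistEquiv (k : Type u) [Field k] {kb : Type u} [Field kb] [Algebra k kb]
    {G : Type u} [Group G] (M N : Rep' kb G) : Prop :=
  ∃ (σ : kb ≃ₐ[k] kb) (e : M.carrier ≃+ N.carrier),
    (∀ (c : kb) (v : M.carrier), e (c • v) = σ c • e v) ∧
    ∀ (g : G) (v : M.carrier), e (M.rho g v) = N.rho g (e v)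

/-- The `k̄`-representation `V` is a constituent of `W ⊗_k k̄`, for a `k`-representation
`W`: there is a nonzero `G`-equivariant `k̄`-linear map `k̄ ⊗_k W → V`. -/
def IsConstituent (k : Type u) [Field k] (kb : Type u) [Field kb] [Algebra k kb]
    {G : Type u} [Group G] (W : Rep' k G) (V : Rep' kb G) : Prop :=
  ∃ φ : TensorProduct k kb W.carrier →ₗ[kb] V.carrier, φ ≠ 0 ∧
    ∀ (g : G) (x : TensorProduct k kb W.carrier),
      φ (LinearMap.baseChange kb (W.rho g) x) = V.rho g (φ x)


namespace Stmt11Aux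

open TensorProduct Polynomial


variable {k kb G : Type u} [Field k] [Field kb] [Algebra k kb] [Group G]

section Twist

variable (Wc : Type u) [AddCommGroup Wc] [Module k Wc]

/-- The Galois twist `σ ⊗ id` on `kb ⊗[k] Wc`, as a `k`-linear map. -/
noncomputable def galTw (σ : kb ≃ₐ[k] kb) :
    TensorProduct k kb Wc →ₗ[k] TensorProduct k kb Wc :=
  LinearMap.rTensor Wc σ.toLinearMap

variable {Wc}

@[simp] lemma galTw_tmul (σ : kb ≃ₐ[k] kb) (c : kb) (w : Wc) :
    galTw Wc σ (c ⊗ₜ[k] w) = σ c ⊗ₜ[k] w := rfl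

lemma galTw_smul (σ : kb ≃ₐ[k] kb) (c : kb) (x : TensorProduct k kb Wc) :
    galTw Wc σ (c • x) = σ c • galTw Wc σ x := by
  induction x using TensorProduct.induction_on with
  | zero => simp
  | tmul a w => rw [TensorProduct.smul_tmul', galTw_tmul, galTw_tmul, TensorProduct.smul_tmul',
      smul_eq_mul, smul_eq_mul, map_mul]
  | add x y hx hy => rw [smul_add, map_add, hx, hy, map_add, smul_add]

lemma galTw_galTw (σ : kb ≃ₐ[k] kb) (x : TensorProduct k kb Wc) :
    galTw Wc σ.symm (galTw Wc σ x) = x := by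
  induction x using TensorProduct.induction_on with
  | zero => simp
  | tmul a w => simp
  | add x y hx hy => rw [map_add, map_add, hx, hy]

lemma galTw_baseChange (σ : kb ≃ₐ[k] kb) (f : Wc →ₗ[k] Wc) (x : TensorProduct k kb Wc) :
    galTw Wc σ (f.baseChange kb x) = f.baseChange kb (galTw Wc σ x) := by
  induction x using TensorProduct.induction_on with
  | zero => simp
  | tmul a w => simp
  | add x y hx hy => rw [map_add, map_add, hx, hy, map_add, map_add]

lemma eq_zero_of_forall_one_tmul {X : Type u} [AddCommGroup X] [Module kb X]
    (φ : TensorProduct k kb Wc →ₗ[kb] X) (h : ∀ w : Wc, φ ((1 : kb) ⊗ₜ[k] w) = 0) :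
    φ = 0 := by
  ext x
  show φ x = 0
  induction x using TensorProduct.induction_on with
  | zero => simp
  | tmul c w =>
      have : c ⊗ₜ[k] w = c • ((1 : kb) ⊗ₜ[k] w) := by
        rw [TensorProduct.smul_tmul', smul_eq_mul, mul_one]
      rw [this, map_smul, h, smul_zero]
  | add x y hx hy => rw [map_add, hx, hy, add_zero]

end Twist

/-- Averaging: an equivariant section of a surjective equivariant map. -/
lemma exists_equivariant_section [Finite G] [CharZero kb] {M N : Type u}
    [AddCommGroup M] [Module kb M] [AddCommGroup N] [Module kb N]
    (ρM : Representation kb G M) (ρN : Representation kb G N)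
    (f : M →ₗ[kb] N) (hsurj : Function.Surjective f)
    (hequiv : ∀ g x, f (ρM g x) = ρN g (f x)) :
    ∃ s : N →ₗ[kb] M, (∀ y, f (s y) = y) ∧ ∀ g y, s (ρN g y) = ρM g (s y) := by
  cases nonempty_fintype G
  obtain ⟨s₀, hs₀⟩ := f.exists_rightInverse_of_surjective (LinearMap.range_eq_top.2 hsurj)
  have hs₀' : ∀ y, f (s₀ y) = y := fun y => congrArg (fun g => g y) hs₀
  set c : kb := (Fintype.card G : kb)⁻¹ with hc
  have hcard : (Fintype.card G : kb) ≠ 0 := Nat.cast_ne_zero.2 Fintype.card_ne_zero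
  refine ⟨c • ∑ g : G, (ρM g) ∘ₗ s₀ ∘ₗ (ρN g⁻¹), ?_, ?_⟩
  · intro y
    simp only [LinearMap.smul_apply, LinearMap.sum_apply, LinearMap.comp_apply, map_smul, map_sum]
    have : ∀ g : G, f (ρM g (s₀ (ρN g⁻¹ y))) = y := by
      intro g
      rw [hequiv, hs₀', ← Module.End.mul_apply, ← map_mul, mul_inv_cancel, map_one,
        Module.End.one_apply]
    simp only [this, Finset.sum_const, Finset.card_univ, ← Nat.cast_smul_eq_nsmul kb, smul_smul]
    rw [hc, inv_mul_cancel₀ hcard, one_smul]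
  · intro h y
    simp only [LinearMap.smul_apply, LinearMap.sum_apply, LinearMap.comp_apply, map_smul, map_sum]
    congr 1
    refine Fintype.sum_equiv (Equiv.mulLeft h⁻¹) _ _ fun x => ?_
    show ρM x (s₀ (ρN x⁻¹ (ρN h y))) = ρM h (ρM (h⁻¹ * x) (s₀ (ρN (h⁻¹ * x)⁻¹ y)))
    have e2 : (h⁻¹ * x)⁻¹ = x⁻¹ * h := by group
    rw [e2, ← Module.End.mul_apply (ρN x⁻¹), ← map_mul, ← Module.End.mul_apply (ρM h), ← map_mul,
      show h * (h⁻¹ * x) = x by group]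

/-- In `char 0`, an element of the algebraic closure fixed by all automorphisms over the
base lies in the base field. -/
lemma mem_range_of_fixed [CharZero k] [IsAlgClosure k kb] (c : kb)
    (h : ∀ σ : kb ≃ₐ[k] kb, σ c = c) : ∃ d : k, algebraMap k kb d = c := by
  have hint : IsIntegral k c := Algebra.IsIntegral.isIntegral c
  have hirr := minpoly.irreducible hint
  have hsep : (minpoly k c).Separable := hirr.separable
  haveI : IsAlgClosed kb := IsAlgClosure.isAlgClosed k
  have hsplits : Splits ((minpoly k c).map (algebraMap k kb)) :=
    IsAlgClosed.splits _
  have hroot : ∀ x ∈ ((minpoly k c).map (algebraMap k kb)).roots, x = c := by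
    intro x hx
    have hx0 : Polynomial.aeval x (minpoly k c) = 0 := by
      have := Polynomial.isRoot_of_mem_roots hx
      rwa [Polynomial.IsRoot, Polynomial.eval_map, ← Polynomial.aeval_def] at this
    obtain ⟨σ, hσ⟩ := minpoly.exists_algEquiv_of_root (K := k) (L := kb)
      (Algebra.IsAlgebraic.isAlgebraic c) hx0
    have := h σ.symm
    rw [← hσ, AlgEquiv.symm_apply_apply] at this
    rw [this, hσ]
  have hnd : ((minpoly k c).map (algebraMap k kb)).roots.Nodup :=
    Polynomial.nodup_roots hsep.map
  have hcard : (minpoly k c).natDegree = ((minpoly k c).map (algebraMap k kb)).roots.card :=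
    (Polynomial.natDegree_map (algebraMap k kb)).symm.trans hsplits.natDegree_eq_card_roots
  have hle : ((minpoly k c).map (algebraMap k kb)).roots.card ≤ 1 := by
    classical
    rw [← Multiset.toFinset_card_of_nodup hnd]
    have hsub : ((minpoly k c).map (algebraMap k kb)).roots.toFinset ⊆ {c} := by
      intro x hx
      rw [Finset.mem_singleton]
      exact hroot x (Multiset.mem_toFinset.mp hx)
    simpa using Finset.card_le_card hsub
  have : (minpoly k c).natDegree = 1 := le_antisymm (hcard ▸ hle) (minpoly.natDegree_pos hint)
  obtain ⟨d, hd⟩ := minpoly.natDegree_eq_one_iff.mp this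
  exact ⟨d, hd⟩


section Descent

variable {k kb G : Type u} [Field k] [Field kb] [Algebra k kb] [Group G]
variable {Wc : Type u} [AddCommGroup Wc] [Module k Wc]

/-- Galois descent: a Galois-stable `kb`-submodule of `kb ⊗[k] Wc` is spanned by its
elements of the form `1 ⊗ w`. -/
lemma descent
    (hfix : ∀ c : kb, (∀ σ : kb ≃ₐ[k] kb, σ c = c) → ∃ d : k, algebraMap k kb d = c)
    (Y : Submodule kb (TensorProduct k kb Wc))
    (hgal : ∀ (σ : kb ≃ₐ[k] kb), ∀ x ∈ Y, galTw Wc σ x ∈ Y) :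
    Y ≤ Submodule.span kb ((fun w => (1:kb) ⊗ₜ[k] w) '' {w : Wc | (1:kb) ⊗ₜ[k] w ∈ Y}) := by
  classical
  set Z := Submodule.span kb ((fun w => (1:kb) ⊗ₜ[k] w) '' {w : Wc | (1:kb) ⊗ₜ[k] w ∈ Y}) with hZ
  set b := Module.Basis.ofVectorSpace k Wc with hb
  set B := Algebra.TensorProduct.basis kb b with hB
  -- the Galois twist in coordinates
  have hrep : ∀ (σ : kb ≃ₐ[k] kb) (x : TensorProduct k kb Wc) (i),
      B.repr (galTw Wc σ x) i = σ (B.repr x i) := by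
    intro σ x
    induction x using TensorProduct.induction_on with
    | zero => simp
    | tmul a w =>
        intro i
        rw [show galTw Wc σ (a ⊗ₜ[k] w) = σ a ⊗ₜ[k] w from rfl]
        rw [hB, Algebra.TensorProduct.basis_repr_tmul, Algebra.TensorProduct.basis_repr_tmul]
        simp only [Finsupp.smul_apply, Finsupp.mapRange_apply, smul_eq_mul, map_mul,
          AlgEquiv.commutes]
    | add x y hx hy =>
        intro i
        simp only [map_add, Finsupp.add_apply, hx, hy]
  -- elements all of whose coordinates lie in `k` are of the form `1 ⊗ w`
  have hdiag : ∀ x : TensorProduct k kb Wc,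
      (∀ i, ∃ d : k, algebraMap k kb d = B.repr x i) → ∃ w : Wc, x = (1:kb) ⊗ₜ[k] w := by
    intro x hx
    choose d hd using hx
    refine ⟨(B.repr x).support.sum fun i => d i • b i, ?_⟩
    have hx' : x = (B.repr x).sum fun i c => c • B i := by
      conv_lhs => rw [← B.linearCombination_repr x]
      rw [Finsupp.linearCombination_apply]
    rw [TensorProduct.tmul_sum]
    conv_lhs => rw [hx']
    rw [Finsupp.sum]
    refine Finset.sum_congr rfl fun i hi => ?_
    rw [← hd i, hB, Algebra.TensorProduct.basis_apply, TensorProduct.tmul_smul,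
      algebraMap_smul]
  -- main induction on the size of the support
  suffices H : ∀ (n : ℕ) (x : TensorProduct k kb Wc), x ∈ Y →
      (B.repr x).support.card ≤ n → x ∈ Z by
    intro x hx
    exact H _ x hx le_rfl
  intro n
  induction n with
  | zero =>
    intro x hx hcard
    have : B.repr x = 0 := by
      rwa [Nat.le_zero, Finset.card_eq_zero, Finsupp.support_eq_empty] at hcard
    have : x = 0 := by
      have := congrArg B.repr.symm this
      rwa [LinearEquiv.symm_apply_apply, map_zero] at this
    rw [this]; exact Z.zero_mem
  | succ n ih =>
    intro x hx hcard
    by_cases hc : (B.repr x).support.card ≤ n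
    · exact ih x hx hc
    have hcard' : (B.repr x).support.card = n + 1 := le_antisymm hcard (not_le.mp hc)
    have hne : (B.repr x).support.Nonempty := Finset.card_pos.mp (by omega)
    obtain ⟨i₀, hi₀⟩ := hne
    have hc₀ : B.repr x i₀ ≠ 0 := Finsupp.mem_support_iff.mp hi₀
    set c₀ := B.repr x i₀ with hc₀def
    suffices hx' : c₀⁻¹ • x ∈ Z by
      have := Z.smul_mem c₀ hx'
      rwa [smul_inv_smul₀ hc₀] at this
    set x' := c₀⁻¹ • x with hx'def
    have hx'Y : x' ∈ Y := Y.smul_mem _ hx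
    have hreprx' : ∀ i, B.repr x' i = c₀⁻¹ * B.repr x i := by
      intro i; rw [hx'def, map_smul, Finsupp.smul_apply, smul_eq_mul]
    have hsupp' : (B.repr x').support = (B.repr x).support := by
      rw [hx'def, map_smul, Finsupp.support_smul_eq (inv_ne_zero hc₀)]
    have hx'i₀ : B.repr x' i₀ = 1 := by rw [hreprx', inv_mul_cancel₀ hc₀]
    by_cases hall : ∀ i, ∃ d : k, algebraMap k kb d = B.repr x' i
    · obtain ⟨w, hw⟩ := hdiag x' hall
      have hwY : (1:kb) ⊗ₜ[k] w ∈ Y := hw ▸ hx'Y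
      rw [hw]
      exact Submodule.subset_span ⟨w, hwY, rfl⟩
    · push_neg at hall
      obtain ⟨i₁, hi₁⟩ := hall
      set c₁ := B.repr x' i₁ with hc₁def
      have hc₁ : c₁ ≠ 0 := by
        intro h0
        exact hi₁ 0 (by rw [map_zero, ← h0])
      have hi₁mem : i₁ ∈ (B.repr x').support := Finsupp.mem_support_iff.mpr hc₁
      have hi₁i₀ : i₁ ≠ i₀ := by
        intro h
        exact hi₁ 1 (by rw [map_one, hc₁def, h, hx'i₀])
      obtain ⟨σ, hσ⟩ : ∃ σ : kb ≃ₐ[k] kb, σ c₁ ≠ c₁ := by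
        by_contra hcon
        push_neg at hcon
        obtain ⟨d, hd⟩ := hfix c₁ hcon
        exact hi₁ d hd
      set y := galTw Wc σ x' - x' with hy
      have hyY : y ∈ Y := sub_mem (hgal σ x' hx'Y) hx'Y
      have hyrepr : ∀ i, B.repr y i = σ (B.repr x' i) - B.repr x' i := by
        intro i
        rw [hy, map_sub, Finsupp.sub_apply, hrep]
      have hysupp : (B.repr y).support ⊆ (B.repr x').support.erase i₀ := by
        intro i hi
        have hyi : B.repr y i ≠ 0 := Finsupp.mem_support_iff.mp hi
        rw [Finset.mem_erase]
        constructor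
        · intro h
          apply hyi
          rw [hyrepr, h, hx'i₀, map_one, sub_self]
        · rw [Finsupp.mem_support_iff]
          intro h0
          apply hyi
          rw [hyrepr, h0, map_zero, sub_self]
      have hycard : (B.repr y).support.card ≤ n := by
        calc (B.repr y).support.card ≤ ((B.repr x').support.erase i₀).card :=
              Finset.card_le_card hysupp
          _ = (B.repr x').support.card - 1 := Finset.card_erase_of_mem (by rw [hsupp']; exact hi₀)
          _ ≤ n := by rw [hsupp', hcard']; omega
      have hyZ : y ∈ Z := ih y hyY hycard
      set δ := σ c₁ - c₁ with hδdef
      have hδ : δ ≠ 0 := sub_ne_zero.mpr hσ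
      set z := δ⁻¹ • y with hz
      have hzZ : z ∈ Z := Z.smul_mem _ hyZ
      have hzY : z ∈ Y := Y.smul_mem _ hyY
      have hzrepr : ∀ i, B.repr z i = δ⁻¹ * B.repr y i := by
        intro i; rw [hz, map_smul, Finsupp.smul_apply, smul_eq_mul]
      have hzi₁ : B.repr z i₁ = 1 := by
        rw [hzrepr, hyrepr, ← hc₁def, ← hδdef, inv_mul_cancel₀ hδ]
      have hzsupp : (B.repr z).support ⊆ (B.repr x').support.erase i₀ := by
        rw [hz, map_smul, Finsupp.support_smul_eq (inv_ne_zero hδ)]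
        exact hysupp
      set x'' := x' - c₁ • z with hx''
      have hx''Y : x'' ∈ Y := sub_mem hx'Y (Y.smul_mem _ hzY)
      have hx''repr : ∀ i, B.repr x'' i = B.repr x' i - c₁ * B.repr z i := by
        intro i
        rw [hx'', map_sub, map_smul B.repr c₁ z, Finsupp.sub_apply, Finsupp.smul_apply,
          smul_eq_mul]
      have hx''supp : (B.repr x'').support ⊆ (B.repr x').support.erase i₁ := by
        intro i hi
        have hxi : B.repr x'' i ≠ 0 := Finsupp.mem_support_iff.mp hi
        rw [Finset.mem_erase]
        constructor
        · intro h
          apply hxi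
          rw [hx''repr, h, hzi₁, mul_one, ← hc₁def, sub_self]
        · rw [Finsupp.mem_support_iff]
          intro h0
          apply hxi
          have hz0 : B.repr z i = 0 := by
            by_contra hzz
            have := hzsupp (Finsupp.mem_support_iff.mpr hzz)
            rw [Finset.mem_erase, Finsupp.mem_support_iff] at this
            exact this.2 h0
          rw [hx''repr, h0, hz0, mul_zero, sub_self]
      have hx''card : (B.repr x'').support.card ≤ n := by
        calc (B.repr x'').support.card ≤ ((B.repr x').support.erase i₁).card :=
              Finset.card_le_card hx''supp
          _ = (B.repr x').support.card - 1 := Finset.card_erase_of_mem hi₁mem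
          _ ≤ n := by rw [hsupp', hcard']; omega
      have hx''Z : x'' ∈ Z := ih x'' hx''Y hx''card
      have : x' = x'' + c₁ • z := by rw [hx'']; abel
      rw [this]
      exact Z.add_mem hx''Z (Z.smul_mem _ hzZ)


end Descent

section Part1



variable {k kb G : Type u} [Field k] [Field kb] [Algebra k kb] [Group G]

lemma part1 [Finite G] (V : Rep' kb G) (hV : V.Irr) :
    ∃ W : Rep' k G, W.Irr ∧ Module.Finite k W.carrier ∧ IsConstituent k kb W V := by
  classical
  letI : Module k V.carrier := Module.compHom V.carrier (algebraMap k kb)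
  have hksmul : ∀ (a : k) (x : V.carrier), a • x = algebraMap k kb a • x := fun _ _ => rfl
  letI : IsScalarTower k kb V.carrier :=
    ⟨fun a b x => by rw [Algebra.smul_def, mul_smul]; rfl⟩
  haveI := hV.1
  obtain ⟨v, hv⟩ := exists_ne (0 : V.carrier)
  set P : Submodule k V.carrier → Prop := fun U => U ≠ ⊥ ∧ ∀ g : G, ∀ x ∈ U, V.rho g x ∈ U
    with hP
  set W₁ : Submodule k V.carrier := Submodule.span k (Set.range fun g : G => V.rho g v) with hW₁
  have hvW₁ : v ∈ W₁ := by
    refine Submodule.subset_span ⟨1, ?_⟩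
    show V.rho 1 v = v
    rw [map_one]; rfl
  haveI hW₁fin : FiniteDimensional k ↥W₁ :=
    FiniteDimensional.span_of_finite k (Set.finite_range _)
  have hW₁P : P W₁ := by
    constructor
    · intro h
      rw [h] at hvW₁
      exact hv (Submodule.mem_bot k |>.mp hvW₁)
    · intro g x hx
      induction hx using Submodule.span_induction with
      | mem x hx =>
          obtain ⟨h, rfl⟩ := hx
          refine Submodule.subset_span ⟨g * h, ?_⟩
          show V.rho (g * h) v = V.rho g (V.rho h v)
          rw [map_mul]; rfl
      | zero => rw [map_zero]; exact W₁.zero_mem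
      | add x y _ _ hx hy => rw [map_add]; exact W₁.add_mem hx hy
      | smul a x _ hx =>
          rw [hksmul, map_smul, ← hksmul]
          exact W₁.smul_mem a hx
  set S : Set ℕ := {n : ℕ | ∃ U : Submodule k V.carrier,
    (P U ∧ U ≤ W₁) ∧ Module.finrank k ↥U = n} with hS
  have hSne : S.Nonempty := ⟨_, W₁, ⟨hW₁P, le_rfl⟩, rfl⟩
  obtain ⟨U, ⟨hUP, hUle⟩, hUrank⟩ := Nat.sInf_mem hSne
  haveI : FiniteDimensional k ↥U := Submodule.finiteDimensional_of_le hUle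
  have hUmin : ∀ U' : Submodule k V.carrier, U' ≤ U → P U' → U' = U := by
    intro U' hle hPU'
    have h2 : sInf S ≤ Module.finrank k ↥U' := Nat.sInf_le ⟨U', ⟨hPU', hle.trans hUle⟩, rfl⟩
    exact Submodule.eq_of_le_of_finrank_le hle (by rw [hUrank]; exact h2)
  -- the representation on U
  set ρU : Representation k G ↥U :=
    { toFun := fun g => ((V.rho g).restrictScalars k).restrict (hUP.2 g)
      map_one' := by
        ext x
        show V.rho 1 (x : V.carrier) = (x : V.carrier)
        rw [map_one]; rfl
      map_mul' := fun g h => by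
        ext x
        show V.rho (g * h) (x : V.carrier) = V.rho g (V.rho h (x : V.carrier))
        rw [map_mul]; rfl } with hρU
  have hρUapply : ∀ (g : G) (u : ↥U), (ρU g u : V.carrier) = V.rho g (u : V.carrier) :=
    fun g u => rfl
  refine ⟨⟨↥U, ρU⟩, ⟨?_, ?_⟩, ?_, ?_⟩
  · -- Nontrivial
    obtain ⟨x, hxU, hx0⟩ := Submodule.exists_mem_ne_zero_of_ne_bot hUP.1
    exact ⟨⟨x, hxU⟩, 0, fun h => hx0 (by simpa using congrArg Subtype.val h)⟩
  · -- irreducibility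
    intro U₀ hU₀
    by_cases hbot : U₀ = ⊥
    · exact Or.inl hbot
    right
    set U₀' := U₀.map U.subtype with hU₀'
    have hU₀'P : P U₀' := by
      constructor
      · obtain ⟨x, hxU, hx0⟩ := Submodule.exists_mem_ne_zero_of_ne_bot hbot
        intro h
        have : (x : V.carrier) ∈ U₀' := ⟨x, hxU, rfl⟩
        rw [h, Submodule.mem_bot] at this
        exact hx0 (Subtype.ext this)
      · rintro g _ ⟨y, hy, rfl⟩
        exact ⟨ρU g y, hU₀ g y hy, rfl⟩
    have hU₀'U : U₀' = U := hUmin U₀' (Submodule.map_subtype_le U U₀) hU₀'P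
    have hmap : Submodule.map U.subtype U₀ = Submodule.map U.subtype ⊤ := by
      rw [Submodule.map_subtype_top]
      exact hU₀'U
    exact Submodule.map_injective_of_injective (Submodule.injective_subtype U) hmap
  · -- finiteness
    exact inferInstanceAs (Module.Finite k ↥U)
  · -- constituent
    refine ⟨LinearMap.liftBaseChange kb U.subtype, ?_, ?_⟩
    · intro h0
      obtain ⟨x, hxU, hx0⟩ := Submodule.exists_mem_ne_zero_of_ne_bot hUP.1
      have := congrArg (fun ψ => ψ ((1:kb) ⊗ₜ[k] (⟨x, hxU⟩ : ↥U)))  h0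
      simp only [LinearMap.liftBaseChange_tmul, one_smul, LinearMap.zero_apply] at this
      exact hx0 this
    · intro g x
      induction x using TensorProduct.induction_on with
      | zero => simp
      | tmul c u =>
          rw [LinearMap.baseChange_tmul, LinearMap.liftBaseChange_tmul,
            LinearMap.liftBaseChange_tmul, map_smul]
          exact congrArg (c • ·) (hρUapply g u)
      | add x y hx hy => rw [map_add, map_add, hx, hy, map_add, map_add]


end Part1

section Parts23

variable {k kb G : Type u} [Field k] [Field kb] [Algebra k kb] [Group G]

/-- Base change of a representation. -/
noncomputable def bcRep (Wc : Type u) [AddCommGroup Wc] [Module k Wc]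
    (ρ : Representation k G Wc) :
    Representation kb G (TensorProduct k kb Wc) where
  toFun g := (ρ g).baseChange kb
  map_one' := by
    show (ρ 1).baseChange kb = 1
    rw [map_one]
    exact LinearMap.baseChange_one _ _
  map_mul' g h := by
    show (ρ (g * h)).baseChange kb = (ρ g).baseChange kb * (ρ h).baseChange kb
    rw [map_mul]
    exact LinearMap.baseChange_mul (ρ g) (ρ h)

lemma part2 [Finite G] [CharZero k] (W W' : Rep' k G) (V : Rep' kb G)
    (hW : W.Irr) (hW' : W'.Irr) (hV : V.Irr)
    (h1 : IsConstituent k kb W V) (h2 : IsConstituent k kb W' V) : W.Iso W' := by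
  classical
  haveI : CharZero kb := charZero_of_injective_algebraMap (algebraMap k kb).injective
  obtain ⟨φ, hφ0, hφeq⟩ := h1
  obtain ⟨φ', hφ'0, hφ'eq⟩ := h2
  -- φ' is surjective
  have hstab : ∀ g : G, ∀ y ∈ LinearMap.range φ', V.rho g y ∈ LinearMap.range φ' := by
    rintro g _ ⟨x, rfl⟩
    exact ⟨LinearMap.baseChange kb (W'.rho g) x, hφ'eq g x⟩
  have hsur : Function.Surjective φ' := by
    rw [← LinearMap.range_eq_top]
    rcases hV.2 (LinearMap.range φ') hstab with h | h
    · exact absurd (LinearMap.range_eq_bot.mp h) hφ'0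
    · exact h
  obtain ⟨s, hssec, hseq⟩ := exists_equivariant_section (bcRep W'.carrier W'.rho) V.rho φ'
    hsur hφ'eq
  set θ : TensorProduct k kb W.carrier →ₗ[kb] TensorProduct k kb W'.carrier := s ∘ₗ φ with hθ
  have hθeq : ∀ (g : G) (x : TensorProduct k kb W.carrier),
      θ (LinearMap.baseChange kb (W.rho g) x) = LinearMap.baseChange kb (W'.rho g) (θ x) := by
    intro g x
    show s (φ (LinearMap.baseChange kb (W.rho g) x)) = _
    rw [hφeq, hseq]
    rfl
  obtain ⟨x₀, hx₀⟩ : ∃ x, φ x ≠ 0 := by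
    by_contra hc
    push_neg at hc
    exact hφ0 (LinearMap.ext fun x => by rw [hc]; rfl)
  obtain ⟨w₀, hw₀⟩ : ∃ w : W.carrier, θ ((1:kb) ⊗ₜ[k] w) ≠ 0 := by
    by_contra hc
    push_neg at hc
    have hθ0 : θ = 0 := eq_zero_of_forall_one_tmul θ hc
    have h1 : θ x₀ = 0 := by rw [hθ0]; rfl
    have h2 : φ' (θ x₀) = φ x₀ := hssec (φ x₀)
    rw [h1, map_zero] at h2
    exact hx₀ h2.symm
  set bK := Module.Basis.ofVectorSpace k kb with hbK
  set bW' := Module.Basis.ofVectorSpace k W'.carrier with hbW'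
  set BW' := Algebra.TensorProduct.basis kb bW' with hBW'
  set x := θ ((1:kb) ⊗ₜ[k] w₀) with hxdef
  obtain ⟨j, hj⟩ : ∃ j, BW'.repr x j ≠ 0 := by
    by_contra hc
    push_neg at hc
    apply hw₀
    have h0 : BW'.repr x = 0 := Finsupp.ext fun j => hc j
    have := congrArg BW'.repr.symm h0
    rwa [LinearEquiv.symm_apply_apply, map_zero] at this
  obtain ⟨l, hl⟩ : ∃ l, bK.repr (BW'.repr x j) l ≠ 0 := by
    by_contra hc
    push_neg at hc
    apply hj
    have h0 : bK.repr (BW'.repr x j) = 0 := Finsupp.ext fun l => hc l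
    have := congrArg bK.repr.symm h0
    rwa [LinearEquiv.symm_apply_apply, map_zero] at this
  set π : TensorProduct k kb W'.carrier →ₗ[k] W'.carrier :=
    (TensorProduct.lid k W'.carrier).toLinearMap ∘ₗ
      (LinearMap.rTensor W'.carrier (bK.coord l)) with hπ
  have hπ_tmul : ∀ (c : kb) (w : W'.carrier), π (c ⊗ₜ[k] w) = bK.repr c l • w := by
    intro c w
    show (TensorProduct.lid k W'.carrier) ((LinearMap.rTensor W'.carrier (bK.coord l))
      (c ⊗ₜ[k] w)) = _
    rw [LinearMap.rTensor_tmul, TensorProduct.lid_tmul, Module.Basis.coord_apply]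
  have hkey : ∀ y : TensorProduct k kb W'.carrier,
      bW'.repr (π y) j = bK.repr (BW'.repr y j) l := by
    intro y
    induction y using TensorProduct.induction_on with
    | zero => simp
    | tmul c w =>
        rw [hπ_tmul]
        have h1 : bW'.repr (bK.repr c l • w) j = bK.repr c l * bW'.repr w j := by
          rw [map_smul, Finsupp.smul_apply, smul_eq_mul]
        have h2 : BW'.repr (c ⊗ₜ[k] w) j = c * algebraMap k kb (bW'.repr w j) := by
          rw [hBW', Algebra.TensorProduct.basis_repr_tmul, Finsupp.smul_apply,
            Finsupp.mapRange_apply, smul_eq_mul]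
        rw [h1, h2, show c * algebraMap k kb (bW'.repr w j) = bW'.repr w j • c by
            rw [Algebra.smul_def, mul_comm], map_smul, Finsupp.smul_apply, smul_eq_mul,
          mul_comm]
    | add y z hy hz =>
        simp only [map_add, Finsupp.add_apply, hy, hz]
  have hπeq : ∀ (g : G) (y : TensorProduct k kb W'.carrier),
      π (LinearMap.baseChange kb (W'.rho g) y) = W'.rho g (π y) := by
    intro g y
    induction y using TensorProduct.induction_on with
    | zero => simp
    | tmul c w =>
        rw [LinearMap.baseChange_tmul]
        rw [hπ_tmul, hπ_tmul]
        rw [map_smul]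
    | add y z hy hz => rw [map_add, map_add, hy, hz, map_add, map_add]
  set f : W.carrier →ₗ[k] W'.carrier :=
    { toFun := fun w => π (θ ((1:kb) ⊗ₜ[k] w))
      map_add' := fun a b => by
        show π (θ ((1:kb) ⊗ₜ[k] (a + b))) = π (θ ((1:kb) ⊗ₜ[k] a)) + π (θ ((1:kb) ⊗ₜ[k] b))
        rw [TensorProduct.tmul_add, map_add, map_add]
      map_smul' := fun a w => by
        show π (θ ((1:kb) ⊗ₜ[k] (a • w))) = a • π (θ ((1:kb) ⊗ₜ[k] w))
        rw [TensorProduct.tmul_smul, ← algebraMap_smul kb a ((1:kb) ⊗ₜ[k] w), map_smul θ,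
          algebraMap_smul, map_smul π] } with hf
  have hfeq : ∀ (g : G) (w : W.carrier), f (W.rho g w) = W'.rho g (f w) := by
    intro g w
    show π (θ ((1:kb) ⊗ₜ[k] (W.rho g w))) = W'.rho g (π (θ ((1:kb) ⊗ₜ[k] w)))
    rw [show (1:kb) ⊗ₜ[k] (W.rho g w) = LinearMap.baseChange kb (W.rho g) ((1:kb) ⊗ₜ[k] w)
      from (LinearMap.baseChange_tmul (W.rho g) (1:kb) w).symm, hθeq, hπeq]
  have hfw₀ : f w₀ ≠ 0 := by
    show π x ≠ 0
    intro h
    apply hl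
    rw [← hkey, h, map_zero, Finsupp.zero_apply]
  have hkstab : ∀ g : G, ∀ y ∈ LinearMap.ker f, W.rho g y ∈ LinearMap.ker f := by
    intro g y hy
    rw [LinearMap.mem_ker] at hy ⊢
    rw [hfeq, hy, map_zero]
  have hker : LinearMap.ker f = ⊥ := by
    rcases hW.2 (LinearMap.ker f) hkstab with h | h
    · exact h
    · exfalso
      apply hfw₀
      have : w₀ ∈ LinearMap.ker f := by rw [h]; trivial
      exact LinearMap.mem_ker.mp this
  have hrstab : ∀ g : G, ∀ y ∈ LinearMap.range f, W'.rho g y ∈ LinearMap.range f := by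
    rintro g _ ⟨y, rfl⟩
    exact ⟨W.rho g y, (hfeq g y)⟩
  have hrange : LinearMap.range f = ⊤ := by
    rcases hW'.2 (LinearMap.range f) hrstab with h | h
    · exfalso
      apply hfw₀
      have : f w₀ ∈ LinearMap.range f := ⟨w₀, rfl⟩
      rw [h, Submodule.mem_bot] at this
      exact this
    · exact h
  refine ⟨LinearEquiv.ofBijective f ⟨LinearMap.ker_eq_bot.mp hker,
    LinearMap.range_eq_top.mp hrange⟩, fun g v => ?_⟩
  exact hfeq g v

lemma part3bwd (W : Rep' k G) (V V' : Rep' kb G)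
    (hWV : IsConstituent k kb W V) (htw : GalTwistEquiv k V V') :
    IsConstituent k kb W V' := by
  classical
  obtain ⟨φ, hφ0, hφeq⟩ := hWV
  obtain ⟨σ, e, hsemi, heq⟩ := htw
  letI : Module k V'.carrier := Module.compHom V'.carrier (algebraMap k kb)
  letI : IsScalarTower k kb V'.carrier :=
    ⟨fun a b x => by rw [Algebra.smul_def, mul_smul]; rfl⟩
  set f' : W.carrier →ₗ[k] V'.carrier :=
    { toFun := fun w => e (φ ((1:kb) ⊗ₜ[k] w))
      map_add' := fun a b => by
        show e (φ ((1:kb) ⊗ₜ[k] (a + b))) = e (φ ((1:kb) ⊗ₜ[k] a)) + e (φ ((1:kb) ⊗ₜ[k] b))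
        rw [TensorProduct.tmul_add, map_add, map_add]
      map_smul' := fun a w => by
        show e (φ ((1:kb) ⊗ₜ[k] (a • w))) = a • e (φ ((1:kb) ⊗ₜ[k] w))
        rw [TensorProduct.tmul_smul, ← algebraMap_smul kb a ((1:kb) ⊗ₜ[k] w), map_smul φ,
          hsemi, AlgEquiv.commutes]
        rfl } with hf'
  refine ⟨LinearMap.liftBaseChange kb f', ?_, ?_⟩
  · obtain ⟨w, hw⟩ : ∃ w : W.carrier, φ ((1:kb) ⊗ₜ[k] w) ≠ 0 := by
      by_contra hc
      push_neg at hc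
      exact hφ0 (eq_zero_of_forall_one_tmul φ hc)
    intro h0
    have h1 := congrArg (fun ψ => ψ ((1:kb) ⊗ₜ[k] w)) h0
    simp only [LinearMap.liftBaseChange_tmul, one_smul, LinearMap.zero_apply] at h1
    apply hw
    have h2 : e (φ ((1:kb) ⊗ₜ[k] w)) = e 0 := by rw [map_zero]; exact h1
    exact e.injective h2
  · intro g y
    induction y using TensorProduct.induction_on with
    | zero => simp
    | tmul c w =>
        rw [LinearMap.baseChange_tmul, LinearMap.liftBaseChange_tmul,
          LinearMap.liftBaseChange_tmul, map_smul]
        congr 1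
        show e (φ ((1:kb) ⊗ₜ[k] (W.rho g w))) = V'.rho g (e (φ ((1:kb) ⊗ₜ[k] w)))
        rw [show (1:kb) ⊗ₜ[k] (W.rho g w) = LinearMap.baseChange kb (W.rho g) ((1:kb) ⊗ₜ[k] w)
          from (LinearMap.baseChange_tmul (W.rho g) (1:kb) w).symm, hφeq, heq]
    | add y z hy hz => rw [map_add, map_add, hy, hz, map_add, map_add]

lemma part3fwd [Finite G] [CharZero k] [IsAlgClosure k kb] (W : Rep' k G) (V V' : Rep' kb G)
    (hW : W.Irr) (hV : V.Irr) (hV' : V'.Irr)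
    (hWV : IsConstituent k kb W V) (hWV' : IsConstituent k kb W V') :
    GalTwistEquiv k V V' := by
  classical
  haveI : CharZero kb := charZero_of_injective_algebraMap (algebraMap k kb).injective
  obtain ⟨φ, hφ0, hφeq⟩ := hWV
  obtain ⟨φ', hφ'0, hφ'eq⟩ := hWV'
  set M := TensorProduct k kb W.carrier with hM
  set ρM := bcRep (kb := kb) W.carrier W.rho with hρM
  have hρMdef : ∀ g : G, ρM g = LinearMap.baseChange kb (W.rho g) := fun g => rfl
  -- φ is surjective
  have hstab : ∀ g : G, ∀ y ∈ LinearMap.range φ, V.rho g y ∈ LinearMap.range φ := by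
    rintro g _ ⟨x, rfl⟩
    exact ⟨LinearMap.baseChange kb (W.rho g) x, hφeq g x⟩
  have hsur : Function.Surjective φ := by
    rw [← LinearMap.range_eq_top]
    rcases hV.2 (LinearMap.range φ) hstab with h | h
    · exact absurd (LinearMap.range_eq_bot.mp h) hφ0
    · exact h
  obtain ⟨s, hssec, hseq⟩ := exists_equivariant_section ρM V.rho φ hsur hφeq
  -- the family of twisted images of V in M
  set F : Set (Submodule kb M) := {T | (∀ g : G, ∀ x ∈ T, ρM g x ∈ T) ∧
    ∃ (σ : kb ≃ₐ[k] kb) (e : V.carrier →+ M),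
      (∀ (c : kb) (v : V.carrier), e (c • v) = σ c • e v) ∧
      (∀ (g : G) (v : V.carrier), e (V.rho g v) = ρM g (e v)) ∧
      (T : Set M) = Set.range e} with hF
  set Y := sSup F with hY
  have hT₀F : LinearMap.range s ∈ F := by
    constructor
    · rintro g _ ⟨v, rfl⟩
      exact ⟨V.rho g v, hseq g v⟩
    · refine ⟨AlgEquiv.refl, s.toAddMonoidHom, fun c v => by simp, fun g v => hseq g v, ?_⟩
      exact LinearMap.coe_range s
  have hYne : Y ≠ ⊥ := by
    haveI := hV.1
    obtain ⟨v₀, hv₀⟩ := exists_ne (0 : V.carrier)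
    have hsv₀ : s v₀ ≠ 0 := by
      intro h
      apply hv₀
      have hsec := hssec v₀
      rw [h, map_zero] at hsec
      exact hsec.symm
    intro h
    apply hsv₀
    have hmem : s v₀ ∈ Y := le_sSup hT₀F ⟨v₀, rfl⟩
    rwa [h, Submodule.mem_bot] at hmem
  -- Y is G-stable
  have hYg : ∀ g : G, ∀ x ∈ Y, ρM g x ∈ Y := by
    intro g
    have hle : Y ≤ Submodule.comap (ρM g) Y := by
      apply sSup_le
      intro T hT x hx
      exact Submodule.mem_comap.mpr (le_sSup hT (hT.1 g x hx))
    intro x hx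
    exact Submodule.mem_comap.mp (hle hx)
  -- Y is Galois-stable
  have htwist : ∀ (σ : kb ≃ₐ[k] kb), ∀ T ∈ F, ∃ T' ∈ F, ∀ x ∈ T, galTw W.carrier σ x ∈ T' := by
    intro σ T hT
    obtain ⟨hTg, σT, e, hsemi, heqv, hrange⟩ := hT
    refine ⟨{ carrier := galTw W.carrier σ '' (T : Set M)
              add_mem' := ?_
              zero_mem' := ⟨0, T.zero_mem, map_zero _⟩
              smul_mem' := ?_ }, ⟨?_, ?_⟩, ?_⟩
    · rintro _ _ ⟨a, ha, rfl⟩ ⟨b, hb, rfl⟩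
      exact ⟨a + b, T.add_mem ha hb, map_add _ a b⟩
    · rintro c _ ⟨a, ha, rfl⟩
      refine ⟨σ.symm c • a, T.smul_mem _ ha, ?_⟩
      rw [galTw_smul, AlgEquiv.apply_symm_apply]
    · rintro g _ ⟨a, ha, rfl⟩
      exact ⟨ρM g a, hTg g a ha, galTw_baseChange σ (W.rho g) a⟩
    · refine ⟨σT.trans σ, ((galTw W.carrier σ).toAddMonoidHom.comp e), fun c v => ?_,
        fun g v => ?_, ?_⟩
      · show galTw W.carrier σ (e (c • v)) = (σT.trans σ) c • galTw W.carrier σ (e v)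
        rw [hsemi, galTw_smul]
        rfl
      · show galTw W.carrier σ (e (V.rho g v)) = ρM g (galTw W.carrier σ (e v))
        rw [heqv, hρMdef, galTw_baseChange]
      · show galTw W.carrier σ '' (T : Set M) = Set.range _
        rw [hrange]
        exact (Set.range_comp (galTw W.carrier σ) e).symm
    · intro x hx
      exact ⟨x, hx, rfl⟩
  have hgalY : ∀ (σ : kb ≃ₐ[k] kb), ∀ x ∈ Y, galTw W.carrier σ x ∈ Y := by
    intro σ
    set Yσ : Submodule kb M :=
      { carrier := {x | galTw W.carrier σ x ∈ Y}
        add_mem' := fun ha hb => by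
          show galTw W.carrier σ _ ∈ Y
          rw [map_add]
          exact Y.add_mem ha hb
        zero_mem' := by
          show galTw W.carrier σ 0 ∈ Y
          rw [map_zero]
          exact Y.zero_mem
        smul_mem' := fun c x hx => by
          show galTw W.carrier σ (c • x) ∈ Y
          rw [galTw_smul]
          exact Y.smul_mem _ hx } with hYσ
    have hle : Y ≤ Yσ := by
      apply sSup_le
      intro T hT x hx
      obtain ⟨T', hT'F, hmem⟩ := htwist σ T hT
      exact le_sSup hT'F (hmem x hx)
    intro x hx
    exact hle hx
  -- descent: Y = ⊤
  set U : Submodule k W.carrier :=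
    { carrier := {w | (1:kb) ⊗ₜ[k] w ∈ Y}
      add_mem' := fun ha hb => by
        show (1:kb) ⊗ₜ[k] _ ∈ Y
        rw [TensorProduct.tmul_add]
        exact Y.add_mem ha hb
      zero_mem' := by
        show (1:kb) ⊗ₜ[k] (0 : W.carrier) ∈ Y
        rw [TensorProduct.tmul_zero]
        exact Y.zero_mem
      smul_mem' := fun a w hw => by
        show (1:kb) ⊗ₜ[k] (a • w) ∈ Y
        rw [TensorProduct.tmul_smul, ← algebraMap_smul kb a ((1:kb) ⊗ₜ[k] w)]
        exact Y.smul_mem _ hw } with hU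
  have hdesc : Y ≤ Submodule.span kb ((fun w => (1:kb) ⊗ₜ[k] w) '' {w : W.carrier |
      (1:kb) ⊗ₜ[k] w ∈ Y}) :=
    descent (fun c hc => mem_range_of_fixed c hc) Y hgalY
  have hUne : U ≠ ⊥ := by
    intro hbot
    obtain ⟨x, hxY, hx0⟩ := Submodule.exists_mem_ne_zero_of_ne_bot hYne
    apply hx0
    have hxZ := hdesc hxY
    have hspan : Submodule.span kb ((fun w => (1:kb) ⊗ₜ[k] w) '' {w : W.carrier |
        (1:kb) ⊗ₜ[k] w ∈ Y}) ≤ ⊥ := by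
      rw [Submodule.span_le]
      rintro _ ⟨w, hw, rfl⟩
      have hwU : w ∈ U := hw
      rw [hbot, Submodule.mem_bot] at hwU
      show (1:kb) ⊗ₜ[k] w ∈ (⊥ : Submodule kb (TensorProduct k kb W.carrier))
      rw [hwU, TensorProduct.tmul_zero]
      exact Submodule.zero_mem ⊥
    simpa using hspan hxZ
  have hUstab : ∀ g : G, ∀ w ∈ U, W.rho g w ∈ U := by
    intro g w hw
    show (1:kb) ⊗ₜ[k] (W.rho g w) ∈ Y
    have heq : (1:kb) ⊗ₜ[k] (W.rho g w) = ρM g ((1:kb) ⊗ₜ[k] w) := by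
      rw [hρMdef, LinearMap.baseChange_tmul]
    rw [heq]
    exact hYg g _ hw
  have hUtop : U = ⊤ := by
    rcases hW.2 U hUstab with h | h
    · exact absurd h hUne
    · exact h
  have hYall : ∀ x : TensorProduct k kb W.carrier, x ∈ Y := by
    intro x
    induction x using TensorProduct.induction_on with
    | zero => exact Y.zero_mem
    | tmul c w =>
        have hw : (1:kb) ⊗ₜ[k] w ∈ Y := by
          have hwU : w ∈ U := by rw [hUtop]; trivial
          exact hwU
        have hcw : c ⊗ₜ[k] w = c • ((1:kb) ⊗ₜ[k] w) := by
          rw [TensorProduct.smul_tmul', smul_eq_mul, mul_one]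
        rw [hcw]
        exact Y.smul_mem _ hw
    | add x y hx hy => exact Y.add_mem hx hy
  have hYtop : Y = ⊤ := eq_top_iff.mpr fun x _ => hYall x
  -- extract a member of the family on which φ' is nonzero
  obtain ⟨T, hTF, y, hyT, hy0⟩ : ∃ T ∈ F, ∃ y ∈ T, φ' y ≠ 0 := by
    by_contra hc
    push_neg at hc
    obtain ⟨x₀, hx₀⟩ : ∃ x, φ' x ≠ 0 := by
      by_contra hd
      push_neg at hd
      exact hφ'0 (LinearMap.ext fun x => by rw [hd]; rfl)
    apply hx₀
    have hle : Y ≤ LinearMap.ker φ' :=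
      sSup_le fun T hT y hy => LinearMap.mem_ker.mpr (hc T hT y hy)
    have hx₀Y : x₀ ∈ Y := by rw [hYtop]; trivial
    exact LinearMap.mem_ker.mp (hle hx₀Y)
  obtain ⟨hTg, σ, e, hsemi, heqv, hrange⟩ := hTF
  set h : V.carrier →+ V'.carrier := φ'.toAddMonoidHom.comp e with hh
  have hhdef : ∀ v, h v = φ' (e v) := fun v => rfl
  have hsemi' : ∀ (c : kb) (v : V.carrier), h (c • v) = σ c • h v := by
    intro c v
    rw [hhdef, hsemi, map_smul, hhdef]
  have heqv' : ∀ (g : G) (v : V.carrier), h (V.rho g v) = V'.rho g (h v) := by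
    intro g v
    rw [hhdef, heqv, hρMdef, hφ'eq, hhdef]
  obtain ⟨v₁, hv₁⟩ : ∃ v, h v ≠ 0 := by
    have hyr : y ∈ Set.range e := by rw [← hrange]; exact hyT
    obtain ⟨v, rfl⟩ := hyr
    exact ⟨v, hy0⟩
  -- kernel
  have hinj : Function.Injective h := by
    set K : Submodule kb V.carrier :=
      { carrier := {v | h v = 0}
        add_mem' := fun ha hb => by
          show h _ = 0
          rw [map_add, ha, hb, add_zero]
        zero_mem' := by
          show h 0 = 0
          rw [map_zero]
        smul_mem' := fun c v hv => by
          show h (c • v) = 0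
          rw [hsemi', hv, smul_zero] } with hK
    have hKstab : ∀ g : G, ∀ v ∈ K, V.rho g v ∈ K := by
      intro g v hv
      show h (V.rho g v) = 0
      rw [heqv', (show h v = 0 from hv), map_zero]
    have hKbot : K = ⊥ := by
      rcases hV.2 K hKstab with hb | ht
      · exact hb
      · exfalso
        apply hv₁
        have : v₁ ∈ K := by rw [ht]; trivial
        exact this
    intro a b hab
    have hmem : a - b ∈ K := by
      show h (a - b) = 0
      rw [map_sub, hab, sub_self]
    rw [hKbot, Submodule.mem_bot] at hmem
    exact sub_eq_zero.mp hmem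
  have hsurj : Function.Surjective h := by
    set R : Submodule kb V'.carrier :=
      { carrier := Set.range h
        add_mem' := fun {a b} ha hb => by
          obtain ⟨u, hu⟩ := ha
          obtain ⟨w, hw⟩ := hb
          exact ⟨u + w, by rw [map_add, hu, hw]⟩
        zero_mem' := ⟨0, map_zero h⟩
        smul_mem' := fun c x hx => by
          obtain ⟨v, hv⟩ := hx
          exact ⟨σ.symm c • v, by rw [hsemi', AlgEquiv.apply_symm_apply, hv]⟩ } with hR
    have hRstab : ∀ g : G, ∀ v' ∈ R, V'.rho g v' ∈ R := by
      rintro g _ ⟨v, rfl⟩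
      exact ⟨V.rho g v, heqv' g v⟩
    have hRtop : R = ⊤ := by
      rcases hV'.2 R hRstab with hb | ht
      · exfalso
        apply hv₁
        have : h v₁ ∈ R := ⟨v₁, rfl⟩
        rw [hb, Submodule.mem_bot] at this
        exact this
      · exact ht
    intro v'
    have : v' ∈ R := by rw [hRtop]; trivial
    exact this
  exact ⟨σ, AddEquiv.ofBijective h ⟨hinj, hsurj⟩, hsemi', heqv'⟩

end Parts23

end Stmt11Aux

/-- For a finite group `G` and a field `k` of characteristic `0` with algebraic closure
`k̄`, the assignment sending an irreducible `k`-representation `W` to the irreducible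
constituents of `W ⊗_k k̄` gives a bijection between isomorphism classes of irreducible
`k`-representations of `G` and the orbits of `Gal(k̄/k)` (acting by twisting coefficients)
on isomorphism classes of irreducible `k̄`-representations of `G`:
(1) every irreducible `k̄`-representation is a constituent of some irreducible
`k`-representation; (2) that `k`-representation is unique up to isomorphism;
(3) two irreducible `k̄`-representations are constituents of the same irreducible
`k`-representation iff they are Galois twists of each other. -/
theorem stmt11 (k : Type u) [Field k] [CharZero k] (kb : Type u) [Field kb] [Algebra k kb]
    [IsAlgClosure k kb] (G : Type u) [Group G] [Finite G] :
    (∀ V : Rep' kb G, V.Irr → Module.Finite kb V.carrier →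
      ∃ W : Rep' k G, W.Irr ∧ Module.Finite k W.carrier ∧ IsConstituent k kb W V) ∧
    (∀ (W W' : Rep' k G) (V : Rep' kb G), W.Irr → W'.Irr → V.Irr →
      IsConstituent k kb W V → IsConstituent k kb W' V → W.Iso W') ∧
    (∀ (W : Rep' k G) (V V' : Rep' kb G), W.Irr → V.Irr → V'.Irr →
      IsConstituent k kb W V →
        (IsConstituent k kb W V' ↔ GalTwistEquiv k V V')) := by
  refine ⟨?_, ?_, ?_⟩
  · intro V hV _
    exact Stmt11Aux.part1 V hV
  · intro W W' V hW hW' hV h1 h2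
    exact Stmt11Aux.part2 W W' V hW hW' hV h1 h2
  · intro W V V' hW hV hV' hWV
    exact ⟨fun h => Stmt11Aux.part3fwd W V V' hW hV hV' hWV h,
           fun h => Stmt11Aux.part3bwd W V V' hWV h⟩
end

section
/- Let f: Y → X be a morphism of schemes and suppose f admits a set of sections S such that for every connected scheme Z, the map Maps(Z,X) × S → Maps(Z,Y), (g,s) ↦ s∘g, is a bijection (f is 'Yoneda trivial'). If the underlying topological space of Y is a disjoint union of its connected components and X is connected, then f is isomorphic over X to the projection ⊔_S X → X. -/
open AlgebraicGeometry CategoryTheory Limits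

universe u

/-- `f : Y ⟶ X` is Yoneda trivial with distinguished set of sections `S`: every element
of `S` is a section of `f`, and for every connected scheme `Z` the composition map
`Maps(Z, X) × S → Maps(Z, Y)` is a bijection. -/
def YonedaTrivial {Y X : Scheme.{u}} (f : Y ⟶ X) (S : Set (X ⟶ Y)) : Prop :=
  (∀ s ∈ S, s ≫ f = 𝟙 X) ∧
    ∀ Z : Scheme.{u}, ConnectedSpace Z →
      Function.Bijective (fun p : (Z ⟶ X) × S => p.1 ≫ (p.2 : X ⟶ Y))


variable {Y X : Scheme.{u}} {f : Y ⟶ X} {S : Set (X ⟶ Y)}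

/-- Choose the decomposition of a map from a connected scheme to `Y`. -/
noncomputable def ydec (h : YonedaTrivial f S) (Z : Scheme.{u}) (hc : ConnectedSpace Z)
    (g : Z ⟶ Y) : (Z ⟶ X) × S :=
  ((h.2 Z hc).2 g).choose

lemma ydec_spec (h : YonedaTrivial f S) (Z : Scheme.{u}) (hc : ConnectedSpace Z)
    (g : Z ⟶ Y) : (ydec h Z hc g).1 ≫ ((ydec h Z hc g).2 : X ⟶ Y) = g :=
  ((h.2 Z hc).2 g).choose_spec

lemma ydec_fst (h : YonedaTrivial f S) (Z : Scheme.{u}) (hc : ConnectedSpace Z)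
    (g : Z ⟶ Y) : (ydec h Z hc g).1 = g ≫ f := by
  have := congrArg (· ≫ f) (ydec_spec h Z hc g)
  simpa [Category.assoc, h.1 _ (ydec h Z hc g).2.2] using this

def ccOpen (hY : ∀ y : Y, IsOpen (connectedComponent y)) (y : Y) : Y.Opens :=
  ⟨connectedComponent y, hY y⟩

noncomputable def componentCover (hY : ∀ y : Y, IsOpen (connectedComponent y)) :
    Y.OpenCover :=
  Scheme.Cover.mkOfCovers Y (fun y => Scheme.Opens.toScheme (ccOpen hY y))
    (fun y => Scheme.Opens.ι _) (fun y => ⟨y, ⟨y, mem_connectedComponent⟩, rfl⟩)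
    (fun _ => inferInstance)

lemma ccConn (hY : ∀ y : Y, IsOpen (connectedComponent y)) (y : Y) :
    ConnectedSpace (Scheme.Opens.toScheme (ccOpen hY y)) :=
  Subtype.connectedSpace isConnected_connectedComponent


/-- If `f : Y ⟶ X` is Yoneda trivial with distinguished sections `S`, `X` is connected,
and the topological space of `Y` is the disjoint union of its connected components (i.e.
all connected components are open), then `f` is isomorphic over `X` to the projection
`⊔_S X → X`. -/
theorem stmt13 {Y X : Scheme.{u}} (f : Y ⟶ X) (S : Set (X ⟶ Y))
    (h : YonedaTrivial f S) [ConnectedSpace X]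
    (hY : ∀ y : Y, IsOpen (connectedComponent y)) :
    ∃ e : Y ≅ ∐ (fun _ : S => X), e.hom ≫ Sigma.desc (fun _ => 𝟙 X) = f := by
  classical
  -- the section attached to a component
  let σ : Y → S := fun y =>
    (ydec h (Scheme.Opens.toScheme (ccOpen hY y)) (ccConn hY y) (ccOpen hY y).ι).2
  -- the map on each component
  let F : ∀ y : Y, Scheme.Opens.toScheme (ccOpen hY y) ⟶ ∐ (fun _ : S => X) :=
    fun y => ((ccOpen hY y).ι ≫ f) ≫ Sigma.ι (fun _ : S => X) (σ y)
  have hFσ : ∀ y : Y, F y = ((ccOpen hY y).ι ≫ f) ≫ Sigma.ι (fun _ : S => X) (σ y) :=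
    fun _ => rfl
  have compat : ∀ y z : Y, pullback.fst ((ccOpen hY y).ι) ((ccOpen hY z).ι) ≫ F y =
      pullback.snd ((ccOpen hY y).ι) ((ccOpen hY z).ι) ≫ F z := by
    intro y z
    by_cases hyz : connectedComponent y = connectedComponent z
    · have hU : ccOpen hY y = ccOpen hY z := TopologicalSpace.Opens.ext hyz
      have main : ∀ (U V : Y.Opens) (hUV : U = V)
          (hcU : ConnectedSpace (Scheme.Opens.toScheme U))
          (hcV : ConnectedSpace (Scheme.Opens.toScheme V)),
          pullback.fst U.ι V.ι ≫ ((U.ι ≫ f) ≫ Sigma.ι (fun _ : S => X)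
              (ydec h _ hcU U.ι).2) =
          pullback.snd U.ι V.ι ≫ ((V.ι ≫ f) ≫ Sigma.ι (fun _ : S => X)
              (ydec h _ hcV V.ι).2) := by
        rintro U V rfl hcU hcV
        have hfs : pullback.fst U.ι U.ι = pullback.snd U.ι U.ι :=
          (cancel_mono U.ι).1 pullback.condition
        rw [hfs]
      exact main _ _ hU _ _
    · have hdisj : Disjoint (connectedComponent y) (connectedComponent z) :=
        connectedComponent_disjoint hyz
      have hempty : IsEmpty (pullback ((ccOpen hY y).ι) ((ccOpen hY z).ι) : Scheme.{u}) := by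
        constructor
        intro p
        have hcond := congrArg
          (fun g : (pullback ((ccOpen hY y).ι) ((ccOpen hY z).ι) : Scheme.{u}) ⟶ Y => g.base p)
          (pullback.condition (f := (ccOpen hY y).ι) (g := (ccOpen hY z).ι))
        simp only [Scheme.Hom.comp_apply] at hcond
        have h1 : ((ccOpen hY y).ι).base
            ((pullback.fst ((ccOpen hY y).ι) ((ccOpen hY z).ι)).base p) ∈ connectedComponent y := by
          have := Set.mem_range_self (f := ((ccOpen hY y).ι).base)
            ((pullback.fst ((ccOpen hY y).ι) ((ccOpen hY z).ι)).base p)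
          rw [Scheme.Opens.range_ι] at this
          exact this
        have h2 : ((ccOpen hY z).ι).base
            ((pullback.snd ((ccOpen hY y).ι) ((ccOpen hY z).ι)).base p) ∈ connectedComponent z := by
          have := Set.mem_range_self (f := ((ccOpen hY z).ι).base)
            ((pullback.snd ((ccOpen hY y).ι) ((ccOpen hY z).ι)).base p)
          rw [Scheme.Opens.range_ι] at this
          exact this
        rw [hcond] at h1
        exact hdisj.ne_of_mem h1 h2 rfl
      exact (AlgebraicGeometry.isInitialOfIsEmpty
        (X := pullback ((ccOpen hY y).ι) ((ccOpen hY z).ι))).hom_ext _ _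
  let e₁ : Y ⟶ ∐ (fun _ : S => X) := (componentCover hY).glueMorphisms F compat
  have hglue : ∀ y : Y, (ccOpen hY y).ι ≫ e₁ = F y := fun y =>
    (componentCover hY).ι_glueMorphisms F compat y
  let e₂ : (∐ (fun _ : S => X)) ⟶ Y := Sigma.desc (fun s => (s : X ⟶ Y))
  have key : ∀ s : S, (s : X ⟶ Y) ≫ e₁ = Sigma.ι (fun _ : S => X) s := by
    intro s
    obtain ⟨x₀⟩ := (inferInstance : Nonempty X)
    set y₀ : Y := (s : X ⟶ Y).base x₀ with hy₀
    have hrange : Set.range ((s : X ⟶ Y)).base ⊆ Set.range ((ccOpen hY y₀).ι).base := by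
      rw [Scheme.Opens.range_ι]
      exact (isPreconnected_range ((s : X ⟶ Y)).base.hom.continuous).subset_connectedComponent ⟨x₀, rfl⟩
    set l : X ⟶ Scheme.Opens.toScheme (ccOpen hY y₀) :=
      IsOpenImmersion.lift ((ccOpen hY y₀).ι) (s : X ⟶ Y) hrange with hl
    have hfac : l ≫ (ccOpen hY y₀).ι = (s : X ⟶ Y) := IsOpenImmersion.lift_fac _ _ hrange
    have hcomp : (s : X ⟶ Y) ≫ e₁ = Sigma.ι (fun _ : S => X) (σ y₀) := by
      rw [← hfac, Category.assoc, hglue, hFσ]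
      have hsf : (s : X ⟶ Y) ≫ f = 𝟙 X := h.1 _ s.2
      rw [← Category.assoc, ← Category.assoc, hfac, hsf, Category.id_comp]
    have huniq : σ y₀ = s := by
      have hinj := (h.2 X ‹_›).1
      have e1 : ((σ y₀ : S) : X ⟶ Y) = (s : X ⟶ Y) := by
        calc ((σ y₀ : S) : X ⟶ Y)
            = ((s : X ⟶ Y) ≫ f) ≫ ((σ y₀ : S) : X ⟶ Y) := by
              rw [h.1 _ s.2, Category.id_comp]
          _ = ((l ≫ (ccOpen hY y₀).ι) ≫ f) ≫ ((σ y₀ : S) : X ⟶ Y) := by rw [hfac]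
          _ = l ≫ ((ydec h _ (ccConn hY y₀) (ccOpen hY y₀).ι).1
                ≫ ((ydec h _ (ccConn hY y₀) (ccOpen hY y₀).ι).2 : X ⟶ Y)) := by
              rw [ydec_fst h]; simp [Category.assoc, σ]
          _ = l ≫ (ccOpen hY y₀).ι := by rw [ydec_spec h]
          _ = (s : X ⟶ Y) := hfac
      have := hinj (a₁ := (𝟙 X, σ y₀)) (a₂ := (𝟙 X, s))
        (by simpa [Category.id_comp] using e1)
      exact (Prod.ext_iff.1 this).2
    rw [hcomp, huniq]
  have hom_inv : e₁ ≫ e₂ = 𝟙 Y := by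
    apply (componentCover hY).hom_ext
    intro (y : Y)
    show (ccOpen hY y).ι ≫ e₁ ≫ e₂ = (ccOpen hY y).ι ≫ 𝟙 Y
    rw [← Category.assoc, hglue, hFσ, Category.comp_id, Category.assoc, Sigma.ι_desc]
    rw [show ((ccOpen hY y).ι ≫ f) = (ydec h _ (ccConn hY y) (ccOpen hY y).ι).1 from
      (ydec_fst h _ _ _).symm]
    exact ydec_spec h _ _ _
  have inv_hom : e₂ ≫ e₁ = 𝟙 _ := by
    apply Sigma.hom_ext
    intro s
    rw [← Category.assoc, Sigma.ι_desc, Category.comp_id]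
    exact key s
  refine ⟨⟨e₁, e₂, hom_inv, inv_hom⟩, ?_⟩
  apply (componentCover hY).hom_ext
  intro (y : Y)
  show (ccOpen hY y).ι ≫ e₁ ≫ _ = (ccOpen hY y).ι ≫ f
  rw [← Category.assoc, hglue, hFσ, Category.assoc, Sigma.ι_desc, Category.comp_id]
end

section
/- A Yoneda trivial morphism of schemes induces isomorphisms on residue fields: if f: Y → X is Yoneda trivial and y ∈ Y maps to x ∈ X, then the induced extension of residue fields k(x) → k(y) is an isomorphism. -/
open AlgebraicGeometry CategoryTheory

universe u

/-- Auxiliary: `residueFieldMap` at equal points. -/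
lemma residueFieldMap_point_congr {Y X : Scheme.{u}} (f : Y ⟶ X) {y y' : Y} (e : y = y') :
    Scheme.Hom.residueFieldMap f y =
      (X.residueFieldCongr (congrArg f.base e)).hom ≫ f.residueFieldMap y' ≫
        (Y.residueFieldCongr e).inv := by
  subst e; simp

/-- A Yoneda trivial morphism of schemes induces isomorphisms on residue fields: for
`y ∈ Y` over `x = f(y)`, the induced map `k(x) → k(y)` is bijective. -/
theorem stmt14 {Y X : Scheme.{u}} (f : Y ⟶ X) (S : Set (X ⟶ Y))
    (h : YonedaTrivial f S) (y : Y) :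
    Function.Bijective (f.residueFieldMap y) := by
  -- apply Yoneda triviality to `Spec k(y) ⟶ Y`
  have hconn : ConnectedSpace (Spec (Y.residueField y)) := inferInstance
  obtain ⟨⟨g, s, hs⟩, heq⟩ := (h.2 _ hconn).2 (Y.fromSpecResidueField y)
  dsimp at heq
  have hsec : s ≫ f = 𝟙 X := h.1 s hs
  have hg : g = Y.fromSpecResidueField y ≫ f := by
    rw [← heq, Category.assoc, hsec, Category.comp_id]
  have pt : Spec (Y.residueField y) :=
    (inferInstance : Unique (PrimeSpectrum (Y.residueField y))).default
  have hgpt : g.base pt = f.base y := by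
    rw [hg]; simp [Scheme.fromSpecResidueField_apply]
  have hsx : s.base (f.base y) = y := by
    have := congrArg (fun m : Spec (Y.residueField y) ⟶ Y => m.base pt) heq
    simpa [Scheme.fromSpecResidueField_apply, hgpt] using this
  -- residue field maps: `f.rfm (s (f y)) ≫ s.rfm (f y)` is (the hom of) an iso
  have hA := (Scheme.residueFieldMap_comp s f (f.base y)).symm.trans
    (Scheme.Hom.residueFieldMap_congr hsec (f.base y))
  simp only [Scheme.residueFieldMap_id, Category.comp_id] at hA
  rw [residueFieldMap_point_congr f hsx] at hA
  simp only [Category.assoc, Category.comp_id] at hA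
  replace hA := (Iso.cancel_iso_hom_left _ _ _).mp hA
  -- hA : f.rfm y ≫ (Y.cg hsx).inv ≫ s.rfm (f y) = 𝟙
  set ψ := (Y.residueFieldCongr hsx).inv ≫ s.residueFieldMap (f.base y) with hψ
  have hψinj : Function.Injective ψ := RingHom.injective ψ.hom
  have hφinj : Function.Injective (f.residueFieldMap y) :=
    RingHom.injective (f.residueFieldMap y).hom
  have hid : ∀ a, ψ (f.residueFieldMap y a) = a := by
    intro a
    have := congrArg (fun m => m.hom a) hA
    simpa using this
  refine ⟨hφinj, fun b => ⟨ψ b, hψinj ?_⟩⟩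
  rw [hid]
end
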